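/- Let x₁, …, x_r be finitely many integers. Then there exist infinitely many prime numbers ℓ such that every x_i is a quadratic residue modulo ℓ, i.e., for each i there exists an integer y with y² ≡ x_i (mod ℓ). -/

import Mathlib

/-- Key lemma: if `ℓ % 8 = 1` and `ℓ ≡ 1` mod every odd prime divisor of `x`,
then `x` is a square mod `ℓ`. -/
lemma isSquare_of_mod (ℓ : ℕ) [Fact ℓ.Prime] (hℓ8 : ℓ % 8 = 1)
    (x : ℤ) (hx : ∀ p : ℕ, p.Prime → p ≠ 2 → (p : ℤ) ∣ x → (ℓ : ZMod p) = 1) :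
    IsSquare ((x : ZMod ℓ)) := by
  have hℓ4 : ℓ % 4 = 1 := by omega
  induction x using UniqueFactorizationMonoid.induction_on_prime with
  | h₁ => simp
  | h₂ u hu =>
      rcases Int.isUnit_iff.mp hu with h | h
      · simp [h]
      · simpa [h] using (ZMod.exists_sq_eq_neg_one_iff (p := ℓ)).mpr (by omega)
  | h₃ a p ha hp ih =>
      have hsa : IsSquare ((a : ZMod ℓ)) := by
        refine ih ?_
        intro q hq hq2 hqa
        exact hx q hq hq2 (hqa.trans (dvd_mul_left a p))
      have hpn : p.natAbs.Prime := Int.prime_iff_natAbs_prime.mp hp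
      haveI : Fact p.natAbs.Prime := ⟨hpn⟩
      have hsp : IsSquare ((p.natAbs : ZMod ℓ)) := by
        rcases eq_or_ne p.natAbs 2 with h2 | h2
        · rw [h2]; push_cast
          exact (ZMod.exists_sq_eq_two_iff (p := ℓ) (by omega)).mpr (Or.inl hℓ8)
        · rw [ZMod.exists_sq_eq_prime_iff_of_mod_four_eq_one hℓ4 h2]
          rw [hx p.natAbs hpn h2 (by exact_mod_cast Int.natAbs_dvd.mpr (dvd_mul_right p a))]
          exact IsSquare.one
      have hm1 : IsSquare (-1 : ZMod ℓ) :=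
        (ZMod.exists_sq_eq_neg_one_iff (p := ℓ)).mpr (by omega)
      have hsp' : IsSquare ((p : ZMod ℓ)) := by
        rcases Int.natAbs_eq p with h | h
        · rw [h, Int.cast_natCast]; exact hsp
        · rw [h, Int.cast_neg, Int.cast_natCast]
          simpa using hm1.mul hsp
      push_cast
      exact hsp'.mul hsa

/-- Given finitely many integers `x₁, …, x_r`, there are infinitely many
prime numbers `ℓ` such that every `x_i` is a quadratic residue modulo `ℓ`. -/
theorem infinitely_many_primes_with_all_quadratic_residues
    (r : ℕ) (x : Fin r → ℤ) :
    {ℓ : ℕ | ℓ.Prime ∧ ∀ i : Fin r, ∃ y : ℤ, (ℓ : ℤ) ∣ y ^ 2 - x i}.Infinite := by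
  set N : ℕ := 8 * ∏ i : Fin r, max (x i).natAbs 1 with hN
  have hN0 : N ≠ 0 := by
    simp only [hN, mul_ne_zero_iff]
    exact ⟨by norm_num, Finset.prod_ne_zero_iff.mpr fun i _ => by positivity⟩
  refine (Nat.infinite_setOf_prime_modEq_one hN0).mono ?_
  rintro ℓ ⟨hℓ, hmod⟩
  haveI : Fact ℓ.Prime := ⟨hℓ⟩
  refine ⟨hℓ, fun i => ?_⟩
  rcases eq_or_ne (x i) 0 with hx0 | hx0
  · exact ⟨0, by simp [hx0]⟩
  have h8 : ℓ % 8 = 1 := by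
    have h8N : (8 : ℕ) ∣ N := ⟨_, rfl⟩
    have := hmod.of_dvd h8N
    simpa [Nat.ModEq, Nat.one_mod] using this
  have hsq : IsSquare ((x i : ZMod ℓ)) := by
    refine isSquare_of_mod ℓ h8 (x i) ?_
    intro p hp hp2 hpx
    have h1 : p ∣ (x i).natAbs := by
      simpa using Int.natAbs_dvd_natAbs.mpr hpx
    have h2 : (x i).natAbs ∣ max (x i).natAbs 1 :=
      (Nat.max_eq_left (Nat.one_le_iff_ne_zero.mpr (Int.natAbs_ne_zero.mpr hx0))).symm ▸ dvd_rfl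
    have hpN : p ∣ N :=
      ((h1.trans h2).trans (Finset.dvd_prod_of_mem (fun j => max (x j).natAbs 1) (Finset.mem_univ i))).mul_left 8
    have : (ℓ : ZMod p) = ((1 : ℕ) : ZMod p) :=
      (ZMod.natCast_eq_natCast_iff _ _ _).mpr (hmod.of_dvd hpN)
    simpa using this
  obtain ⟨c, hc⟩ := hsq
  refine ⟨(c.val : ℤ), ?_⟩
  rw [← ZMod.intCast_zmod_eq_zero_iff_dvd]
  push_cast
  rw [ZMod.natCast_val, ZMod.cast_id, hc]
  ring
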